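/- arXiv:2509.18747 — 2 statements merged into one kernel-verified Lean document; each statement's English description precedes it below -/
import Mathlib

section
/- The function Φ, defined by Φ(x) = ln((e^x − 1)/x) for x ≠ 0 and Φ(0) = 0, is monotone nondecreasing on ℝ. -/
noncomputable def Phi (x : ℝ) : ℝ := if x = 0 then 0 else Real.log ((Real.exp x - 1) / x)

open intervalIntegral MeasureTheory in
theorem Phi_monotone : Monotone Phi := by
  set f : ℝ → ℝ := fun x => ∫ t in (0:ℝ)..1, Real.exp (t * x) with hf
  have hint : ∀ x : ℝ, IntervalIntegrable (fun t => Real.exp (t * x)) volume 0 1 := by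
    intro x
    exact (Real.continuous_exp.comp (continuous_id.mul continuous_const)).intervalIntegrable 0 1
  have hpos : ∀ x : ℝ, 0 < f x := by
    intro x
    exact intervalIntegral_pos_of_pos (hint x) (fun t => Real.exp_pos _) one_pos
  have hmono : Monotone f := by
    intro x y hxy
    refine integral_mono_on zero_le_one (hint x) (hint y) ?_
    intro t ht
    exact Real.exp_le_exp.mpr (mul_le_mul_of_nonneg_left hxy ht.1)
  have hval : ∀ x : ℝ, Phi x = Real.log (f x) := by
    intro x
    by_cases hx : x = 0
    · simp [Phi, hx, hf]
    · have : f x = (Real.exp x - 1) / x := by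
        rw [hf]
        simp only
        rw [integral_comp_mul_right (fun u => Real.exp u) hx]
        simp [integral_exp, smul_eq_mul, div_eq_inv_mul]
      simp [Phi, hx, this]
  intro x y hxy
  rw [hval x, hval y]
  exact Real.log_le_log (hpos x) (hmono hxy)
end

section
/- For all x ≠ 0, x·Φ'(x) − Φ(x) > 0. -/
open Real Set Filter Topology

lemma expm1_ne_zero {x : ℝ} (hx : x ≠ 0) : Real.exp x - 1 ≠ 0 :=
  sub_ne_zero.mpr fun h => hx (Real.exp_injective (by rw [h, Real.exp_zero]))

lemma core_ineq {s : ℝ} (hs : 0 < s) : 2 * s * Real.exp s < Real.exp s ^ 2 - 1 := by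
  have h := Real.quadratic_le_exp_of_nonneg hs.le
  have hq : 0 ≤ (Real.exp s - (1 + s + s ^ 2 / 2)) * (Real.exp s + (1 + s + s ^ 2 / 2) - 2 * s) :=
    mul_nonneg (by linarith) (by nlinarith [Real.exp_pos s, sq_nonneg (s - 1)])
  nlinarith [hq, hs, sq_nonneg (s ^ 2), pow_pos hs 4]

lemma key_ineq {x : ℝ} (hx : x ≠ 0) : x ^ 2 * Real.exp x < (Real.exp x - 1) ^ 2 := by
  rcases hx.lt_or_gt with h | h
  · -- x < 0
    set s : ℝ := -x / 2 with hs_def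
    have hs : 0 < s := by rw [hs_def]; linarith
    have hc := core_ineq hs
    set a : ℝ := Real.exp s with ha_def
    have ha : 0 < a := Real.exp_pos s
    have hprod : Real.exp x * a ^ 2 = 1 := by
      rw [ha_def, sq, ← Real.exp_add, ← Real.exp_add,
        show x + (s + s) = 0 by rw [hs_def]; ring, Real.exp_zero]
    have h2sa : 0 < 2 * s * a := by positivity
    have hp : 0 < (a ^ 2 - 1 - 2 * s * a) * (a ^ 2 - 1 + 2 * s * a) :=
      mul_pos (by linarith) (by linarith)
    have h5 : (Real.exp x - 1) * a ^ 2 = 1 - a ^ 2 := by linear_combination hprod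
    have hx2 : x = -2 * s := by rw [hs_def]; ring
    have h6 : x ^ 2 * a ^ 2 < (1 - a ^ 2) ^ 2 := by rw [hx2]; nlinarith [hp]
    have ha4 : (0:ℝ) < a ^ 4 := by positivity
    have e1 : x ^ 2 * Real.exp x * a ^ 4 = x ^ 2 * a ^ 2 := by
      linear_combination (x ^ 2 * a ^ 2) * hprod
    have e2 : (Real.exp x - 1) ^ 2 * a ^ 4 = (1 - a ^ 2) ^ 2 := by
      linear_combination ((Real.exp x - 1) * a ^ 2 + (1 - a ^ 2)) * h5
    exact lt_of_mul_lt_mul_right (by rw [e1, e2]; exact h6) ha4.le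
  · -- x > 0
    set s : ℝ := x / 2 with hs_def
    have hs : 0 < s := by rw [hs_def]; linarith
    have hc := core_ineq hs
    set a : ℝ := Real.exp s with ha_def
    have ha : 0 < a := Real.exp_pos s
    have hprod : Real.exp x = a ^ 2 := by
      rw [ha_def, sq, ← Real.exp_add, show s + s = x by rw [hs_def]; ring]
    have h2sa : 0 < 2 * s * a := by positivity
    have hp : 0 < (a ^ 2 - 1 - 2 * s * a) * (a ^ 2 - 1 + 2 * s * a) :=
      mul_pos (by linarith) (by linarith)
    have hx2 : x = 2 * s := by rw [hs_def]; ring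
    rw [hprod, hx2]
    nlinarith [hp]

lemma phi_eq {x : ℝ} (hx : x ≠ 0) :
    Phi x = Real.log (Real.exp x - 1) - Real.log x := by
  rw [Phi, if_neg hx, Real.log_div (expm1_ne_zero hx) hx]

lemma phi_eventually (x : ℝ) (hx : x ≠ 0) :
    (fun y => Real.log (Real.exp y - 1) - Real.log y) =ᶠ[𝓝 x] Phi := by
  filter_upwards [isOpen_compl_singleton.mem_nhds (by simpa using hx :
      x ∈ ({0}ᶜ : Set ℝ))] with y hy
  exact (phi_eq (by simpa using hy)).symm

lemma hasDerivAt_phi {x : ℝ} (hx : x ≠ 0) :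
    HasDerivAt Phi (Real.exp x / (Real.exp x - 1) - x⁻¹) x := by
  have h1 : HasDerivAt (fun y => Real.log (Real.exp y - 1) - Real.log y)
      (Real.exp x / (Real.exp x - 1) - x⁻¹) x :=
    (((Real.hasDerivAt_exp x).sub_const 1).log (expm1_ne_zero hx)).sub
      (Real.hasDerivAt_log hx)
  exact h1.congr_of_eventuallyEq (phi_eventually x hx).symm

lemma deriv_phi {x : ℝ} (hx : x ≠ 0) :
    deriv Phi x = Real.exp x / (Real.exp x - 1) - x⁻¹ := (hasDerivAt_phi hx).deriv

lemma deriv2_phi_pos {x : ℝ} (hx : x ≠ 0) : 0 < deriv (deriv Phi) x := by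
  have hme : expm1_ne_zero hx = expm1_ne_zero hx := rfl
  have hD : HasDerivAt (fun y => Real.exp y / (Real.exp y - 1) - y⁻¹)
      ((x ^ 2)⁻¹ - Real.exp x / (Real.exp x - 1) ^ 2) x := by
    have h := ((Real.hasDerivAt_exp x).div ((Real.hasDerivAt_exp x).sub_const 1)
      (expm1_ne_zero hx)).sub (hasDerivAt_inv hx)
    refine h.congr_deriv ?_
    have h1 := expm1_ne_zero hx
    field_simp
    ring
  have hE : (fun y => Real.exp y / (Real.exp y - 1) - y⁻¹) =ᶠ[𝓝 x] deriv Phi := by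
    filter_upwards [isOpen_compl_singleton.mem_nhds (by simpa using hx :
        x ∈ ({0}ᶜ : Set ℝ))] with y hy
    exact (deriv_phi (by simpa using hy)).symm
  have : deriv (deriv Phi) x = (x ^ 2)⁻¹ - Real.exp x / (Real.exp x - 1) ^ 2 := by
    rw [← hE.deriv_eq]
    exact hD.deriv
  rw [this, sub_pos, div_lt_iff₀ (pow_two_pos_of_ne_zero (expm1_ne_zero hx))]
  rw [inv_eq_one_div, div_mul_eq_mul_div, one_mul, lt_div_iff₀ (pow_two_pos_of_ne_zero hx)]
  calc Real.exp x * x ^ 2 = x ^ 2 * Real.exp x := by ring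
    _ < (Real.exp x - 1) ^ 2 := key_ineq hx

lemma tendsto_quot : Tendsto (fun y : ℝ => (Real.exp y - 1) / y) (𝓝[≠] (0:ℝ)) (𝓝 1) := by
  have h := hasDerivAt_iff_tendsto_slope.mp (Real.hasDerivAt_exp 0)
  rw [Real.exp_zero] at h
  refine h.congr fun y => ?_
  simp [slope_def_field, Real.exp_zero]

lemma continuousAt_phi_zero : ContinuousAt Phi 0 := by
  have h1 : Tendsto Phi (𝓝[≠] (0:ℝ)) (𝓝 0) := by
    have hlog : Tendsto (fun y : ℝ => Real.log ((Real.exp y - 1) / y)) (𝓝[≠] (0:ℝ)) (𝓝 0) := by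
      have := (Real.continuousAt_log one_ne_zero).tendsto.comp tendsto_quot
      rwa [Real.log_one] at this
    refine hlog.congr' ?_
    filter_upwards [self_mem_nhdsWithin] with y hy
    rw [Phi, if_neg (by simpa using hy)]
  have h2 : Tendsto Phi (pure (0:ℝ)) (𝓝 0) := by
    have := tendsto_pure_nhds Phi 0
    rwa [show Phi 0 = 0 from if_pos rfl] at this
  have h3 : Tendsto Phi (𝓝[≠] (0:ℝ) ⊔ pure 0) (𝓝 0) := tendsto_sup.mpr ⟨h1, h2⟩
  rw [nhdsNE_sup_pure] at h3
  rw [ContinuousAt, show Phi 0 = 0 from if_pos rfl]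
  exact h3

lemma continuous_phi : Continuous Phi := by
  rw [continuous_iff_continuousAt]
  intro x
  by_cases hx : x = 0
  · subst hx; exact continuousAt_phi_zero
  · have hc : ContinuousAt (fun y => Real.log ((Real.exp y - 1) / y)) x :=
      ContinuousAt.log (((Real.continuous_exp.continuousAt).sub continuousAt_const).div
        continuousAt_id hx) (div_ne_zero (expm1_ne_zero hx) hx)
    refine hc.congr ?_
    filter_upwards [isOpen_compl_singleton.mem_nhds (by simpa using hx : x ∈ ({0}ᶜ : Set ℝ))]
      with y hy
    rw [Phi, if_neg (by simpa using hy)]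

lemma phi_strictConvexOn_Ici : StrictConvexOn ℝ (Ici (0:ℝ)) Phi := by
  refine strictConvexOn_of_deriv2_pos (convex_Ici 0) continuous_phi.continuousOn fun y hy => ?_
  rw [interior_Ici] at hy
  exact deriv2_phi_pos (ne_of_gt hy)

lemma phi_strictConvexOn_Iic : StrictConvexOn ℝ (Iic (0:ℝ)) Phi := by
  refine strictConvexOn_of_deriv2_pos (convex_Iic 0) continuous_phi.continuousOn fun y hy => ?_
  rw [interior_Iic] at hy
  exact deriv2_phi_pos (ne_of_lt hy)

theorem mul_deriv_Phi_sub_Phi_pos (x : ℝ) (hx : x ≠ 0) :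
    x * deriv Phi x - Phi x > 0 := by
  have hd := hasDerivAt_phi hx
  have hdv : deriv Phi x = Real.exp x / (Real.exp x - 1) - x⁻¹ := hd.deriv
  rcases hx.lt_or_gt with h | h
  · have hs := phi_strictConvexOn_Iic.lt_slope_of_hasDerivAt (le_of_lt h) (le_refl (0:ℝ)) h hd
    have hslope : slope Phi x 0 = Phi x / x := by
      rw [slope_def_field, show Phi 0 = 0 from if_pos rfl, zero_sub, zero_sub, neg_div_neg_eq]
    rw [hslope] at hs
    have h2 : x * (Phi x / x) < x * (Real.exp x / (Real.exp x - 1) - x⁻¹) :=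
      mul_lt_mul_of_neg_left hs h
    rw [mul_div_cancel₀ _ hx] at h2
    rw [hdv]; linarith
  · have hs := phi_strictConvexOn_Ici.slope_lt_of_hasDerivAt (le_refl (0:ℝ)) (le_of_lt h) h hd
    have hslope : slope Phi 0 x = Phi x / x := by
      rw [slope_def_field, show Phi 0 = 0 from if_pos rfl, sub_zero, sub_zero]
    rw [hslope] at hs
    have h2 : Phi x / x * x < (Real.exp x / (Real.exp x - 1) - x⁻¹) * x :=
      mul_lt_mul_of_pos_right hs h
    rw [div_mul_cancel₀ _ hx] at h2
    rw [hdv]; linarith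
end
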